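/- The category of finite-dimensional modules over U_q(sl*₂) is not semisimple; concretely, there exists a two-dimensional U_q(sl*₂)-module that is not a direct sum of simple modules. -/

import Mathlib

noncomputable section

/-- `q` is not a root of unity (in particular nonzero). -/
def NotRootOfUnity (q : ℂ) : Prop := q ≠ 0 ∧ ∀ n : ℕ, 0 < n → q ^ n ≠ 1

/-- Defining relations of the Hopf PBW-deformation `U_q(sl*₂, κ)`: generators
`0 = K`, `1 = K⁻¹`, `2 = E`, `3 = F`, relations `KK⁻¹ = K⁻¹K = 1`, `KE = q²EK`,
`KF = q⁻²FK`, `EF - FE = a(Kᵐ - K⁻ᵐ)`.  The case `a = 0` is `U_q(sl*₂)` itself. -/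
inductive UqRel (q a : ℂ) (m : ℕ) : FreeAlgebra ℂ (Fin 4) → FreeAlgebra ℂ (Fin 4) → Prop
  | KKinv : UqRel q a m (FreeAlgebra.ι ℂ 0 * FreeAlgebra.ι ℂ 1) 1
  | KinvK : UqRel q a m (FreeAlgebra.ι ℂ 1 * FreeAlgebra.ι ℂ 0) 1
  | KE : UqRel q a m (FreeAlgebra.ι ℂ 0 * FreeAlgebra.ι ℂ 2)
      (q ^ 2 • (FreeAlgebra.ι ℂ 2 * FreeAlgebra.ι ℂ 0))
  | KF : UqRel q a m (FreeAlgebra.ι ℂ 0 * FreeAlgebra.ι ℂ 3)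
      ((q ^ 2)⁻¹ • (FreeAlgebra.ι ℂ 3 * FreeAlgebra.ι ℂ 0))
  | EF : UqRel q a m (FreeAlgebra.ι ℂ 2 * FreeAlgebra.ι ℂ 3)
      (FreeAlgebra.ι ℂ 3 * FreeAlgebra.ι ℂ 2 +
        a • (FreeAlgebra.ι ℂ 0 ^ m - FreeAlgebra.ι ℂ 1 ^ m))

/-- The algebra `U_q(sl*₂, κ)`; `a = 0` gives the new type quantum group `U_q(sl*₂)`. -/
abbrev Uq (q a : ℂ) (m : ℕ) : Type := RingQuot (UqRel q a m)

def genK (q a : ℂ) (m : ℕ) : Uq q a m := RingQuot.mkAlgHom ℂ (UqRel q a m) (FreeAlgebra.ι ℂ 0)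
def genKinv (q a : ℂ) (m : ℕ) : Uq q a m := RingQuot.mkAlgHom ℂ (UqRel q a m) (FreeAlgebra.ι ℂ 1)
def genE (q a : ℂ) (m : ℕ) : Uq q a m := RingQuot.mkAlgHom ℂ (UqRel q a m) (FreeAlgebra.ι ℂ 2)
def genF (q a : ℂ) (m : ℕ) : Uq q a m := RingQuot.mkAlgHom ℂ (UqRel q a m) (FreeAlgebra.ι ℂ 3)

/-! Auxiliary construction: a 2-dimensional representation of `U_q(sl*₂)` on `ℂ × ℂ`
with `K = diag(1, q²)`, `E = e₂₁`, `F = 0`. -/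

/-- Action of `K`. -/
def Kend (q : ℂ) : Module.End ℂ (ℂ × ℂ) := LinearMap.prodMap LinearMap.id (q ^ 2 • LinearMap.id)

/-- Action of `K⁻¹`. -/
def Kinvend (q : ℂ) : Module.End ℂ (ℂ × ℂ) :=
  LinearMap.prodMap LinearMap.id ((q ^ 2)⁻¹ • LinearMap.id)

/-- Action of `E`. -/
def Eend : Module.End ℂ (ℂ × ℂ) := (LinearMap.inr ℂ ℂ ℂ).comp (LinearMap.fst ℂ ℂ ℂ)

@[simp] lemma Kend_apply (q : ℂ) (p : ℂ × ℂ) : Kend q p = (p.1, q ^ 2 * p.2) := rfl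
@[simp] lemma Kinvend_apply (q : ℂ) (p : ℂ × ℂ) : Kinvend q p = (p.1, (q ^ 2)⁻¹ * p.2) := rfl
@[simp] lemma Eend_apply (p : ℂ × ℂ) : Eend p = (0, p.1) := rfl

/-- The images of the four generators. -/
def gens (q : ℂ) : Fin 4 → Module.End ℂ (ℂ × ℂ) := ![Kend q, Kinvend q, Eend, 0]

/-- The representation on the level of the free algebra. -/
def φfree (q : ℂ) : FreeAlgebra ℂ (Fin 4) →ₐ[ℂ] Module.End ℂ (ℂ × ℂ) :=
  FreeAlgebra.lift ℂ (gens q)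

lemma φfree_rel (q : ℂ) (hq : q ≠ 0) :
    ∀ ⦃x y⦄, UqRel q 0 1 x y → φfree q x = φfree q y := by
  have hq2 : q ^ 2 ≠ 0 := pow_ne_zero _ hq
  intro x y h
  induction h with
  | KKinv =>
      ext <;>
        simp [φfree, gens, Module.End.mul_apply, mul_inv_cancel₀ hq2]
  | KinvK =>
      ext <;>
        simp [φfree, gens, Module.End.mul_apply, inv_mul_cancel₀ hq2]
  | KE =>
      ext <;> simp [φfree, gens, Module.End.mul_apply]
  | KF =>
      ext <;> simp [φfree, gens, Module.End.mul_apply]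
  | EF =>
      ext <;> simp [φfree, gens, Module.End.mul_apply]

/-- The representation of `U_q(sl*₂)`. -/
def φ (q : ℂ) (hq : q ≠ 0) : Uq q 0 1 →ₐ[ℂ] Module.End ℂ (ℂ × ℂ) :=
  RingQuot.liftAlgHom ℂ ⟨φfree q, φfree_rel q hq⟩

/-- Every element of the image of `φfree` preserves the line `{p | p.1 = 0}`. -/
lemma φfree_first_coord (q : ℂ) (x : FreeAlgebra ℂ (Fin 4)) :
    ∀ p : ℂ × ℂ, p.1 = 0 → (φfree q x p).1 = 0 := by
  induction x with
  | grade0 r =>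
      intro p hp
      have : φfree q (algebraMap ℂ _ r) = algebraMap ℂ (Module.End ℂ (ℂ × ℂ)) r :=
        (φfree q).commutes r
      rw [this, Module.algebraMap_end_apply]
      simp [hp]
  | grade1 i =>
      intro p hp
      fin_cases i <;> simp [φfree, gens, hp]
  | mul a b ha hb =>
      intro p hp
      rw [map_mul, Module.End.mul_apply]
      exact ha _ (hb p hp)
  | add a b ha hb =>
      intro p hp
      rw [map_add, LinearMap.add_apply]
      simp [Prod.fst_add, ha p hp, hb p hp]

/-- the category of finite-dimensional `U_q(sl*₂)`-modules is not semisimple: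
there is a two-dimensional `U_q(sl*₂)`-module which is not a direct sum of simple modules. -/
theorem stmt5 (q : ℂ) (hq : NotRootOfUnity q) :
    ∃ (M : Type) (_ : AddCommGroup M) (_ : Module ℂ M) (_ : Module (Uq q 0 1) M)
      (_ : IsScalarTower ℂ (Uq q 0 1) M),
      Module.finrank ℂ M = 2 ∧ ¬ IsSemisimpleModule (Uq q 0 1) M := by
  obtain ⟨hq0, hqn⟩ := hq
  have hq2 : q ^ 2 ≠ 1 := hqn 2 (by norm_num)
  letI instUq : Module (Uq q 0 1) (ℂ × ℂ) := Module.compHom _ (φ q hq0).toRingHom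
  have smul_def : ∀ (u : Uq q 0 1) (p : ℂ × ℂ), u • p = φ q hq0 u p := fun _ _ => rfl
  haveI instTower : IsScalarTower ℂ (Uq q 0 1) (ℂ × ℂ) := ⟨fun c u p => by
    rw [smul_def, smul_def, map_smul, LinearMap.smul_apply]⟩
  refine ⟨ℂ × ℂ, inferInstance, inferInstance, instUq, instTower, ?_, ?_⟩
  · simp [Module.finrank_prod]
  · intro hss
    -- the submodule `{0} × ℂ`
    let N : Submodule (Uq q 0 1) (ℂ × ℂ) :=
      { carrier := {p | p.1 = 0}
        add_mem' := by
          intro a b ha hb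
          simp only [Set.mem_setOf_eq] at *
          simp [ha, hb]
        zero_mem' := rfl
        smul_mem' := by
          intro u p hp
          obtain ⟨x, rfl⟩ := RingQuot.mkAlgHom_surjective ℂ (UqRel q 0 1) u
          show ((RingQuot.liftAlgHom ℂ ⟨φfree q, φfree_rel q hq0⟩)
              ((RingQuot.mkAlgHom ℂ (UqRel q 0 1)) x) p).1 = 0
          rw [RingQuot.liftAlgHom_mkAlgHom_apply]
          exact φfree_first_coord q x p hp }
    have memN : ∀ p : ℂ × ℂ, p ∈ N ↔ p.1 = 0 := fun _ => Iff.rfl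
    haveI : ComplementedLattice (Submodule (Uq q 0 1) (ℂ × ℂ)) := by
      haveI := hss; infer_instance
    obtain ⟨N', hN'⟩ := exists_isCompl N
    -- smul computations for the generators
    have hK : ∀ p : ℂ × ℂ, genK q 0 1 • p = (p.1, q ^ 2 * p.2) := by
      intro p
      rw [smul_def]
      show ((RingQuot.liftAlgHom ℂ ⟨φfree q, φfree_rel q hq0⟩)
          ((RingQuot.mkAlgHom ℂ (UqRel q 0 1)) (FreeAlgebra.ι ℂ 0)) p) = _
      rw [RingQuot.liftAlgHom_mkAlgHom_apply]
      simp [φfree, gens]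
    have hE : ∀ p : ℂ × ℂ, genE q 0 1 • p = (0, p.1) := by
      intro p
      rw [smul_def]
      show ((RingQuot.liftAlgHom ℂ ⟨φfree q, φfree_rel q hq0⟩)
          ((RingQuot.mkAlgHom ℂ (UqRel q 0 1)) (FreeAlgebra.ι ℂ 2)) p) = _
      rw [RingQuot.liftAlgHom_mkAlgHom_apply]
      simp [φfree, gens]
    -- decompose (1,0)
    have htop : ((1 : ℂ), (0 : ℂ)) ∈ N ⊔ N' := by
      rw [hN'.sup_eq_top]; trivial
    obtain ⟨y, hy, z, hz, hyz⟩ := Submodule.mem_sup.mp htop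
    have hz1 : z.1 = 1 := by
      have := congrArg Prod.fst hyz
      simp only [Prod.fst_add] at this
      rw [(memN y).mp hy] at this
      simpa using this
    -- `K•z - z` lies in `N ⊓ N' = ⊥`, forcing `z.2 = 0`
    have hw : genK q 0 1 • z - z ∈ N' := sub_mem (N'.smul_mem _ hz) hz
    have hwN : genK q 0 1 • z - z ∈ N := by
      rw [memN, Prod.fst_sub, hK]
      simp
    have hw0 : genK q 0 1 • z - z = 0 := by
      have : genK q 0 1 • z - z ∈ N ⊓ N' := ⟨hwN, hw⟩
      rwa [hN'.inf_eq_bot, Submodule.mem_bot] at this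
    have hz2 : z.2 = 0 := by
      have := congrArg Prod.snd hw0
      simp only [Prod.snd_sub, hK, Prod.snd_zero] at this
      have h2 : (q ^ 2 - 1) * z.2 = 0 := by ring_nf; linear_combination this
      rcases mul_eq_zero.mp h2 with h | h
      · exact absurd (by linear_combination h) hq2
      · exact h
    -- then `E•z = (0,1)` lies in `N ⊓ N' = ⊥`, contradiction
    have hEz : genE q 0 1 • z = ((0 : ℂ), (1 : ℂ)) := by rw [hE, hz1]
    have hmem : ((0 : ℂ), (1 : ℂ)) ∈ N ⊓ N' := by
      constructor
      · exact rfl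
      · rw [← hEz]; exact N'.smul_mem _ hz
    rw [hN'.inf_eq_bot, Submodule.mem_bot] at hmem
    exact one_ne_zero (congrArg Prod.snd hmem)

end
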